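/- Consider the block matrix A^base ∈ F^{T×m} built as follows: choose k dividing T, ℓ ≥ 1 with kℓ ≤ m, and a (T/k)×ℓ matrix A_b that is a generator matrix of an [ℓ, T/k] MDS code; place k diagonal copies of A_b occupying k disjoint column-segments of size ℓ each (with disjoint row-blocks of size T/k each), and fill the remaining m − kℓ columns with zeros. Fix s with ℓ − T/k ≤ s. Then the set of indices q ∈ [m] for which there exists S ⊆ [m]\{q}, |S| = s, with (q,S) decodable in A^base, is exactly the set of indices of nonzero columns, and has size kℓ. -/
import Mathlib


open Finset
open scoped Classical

section Aux

variable {F : Type*} [Field F] {k t ℓ m : ℕ}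

/-- If the remaining (non-side-info, non-request) columns of segment `c` number at most `t-1`,
then the request column is not in the span of the remaining columns. -/
lemma aux_notMem_span
    (ht : 1 ≤ t) (htℓ : t ≤ ℓ)
    (A : Matrix (Fin (k * t)) (Fin m) F)
    (seg : Fin m → Option (Fin k)) (rb : Fin (k * t) → Fin k)
    (hseg : ∀ c : Fin k, (Finset.univ.filter fun j => seg j = some c).card = ℓ)
    (hzero : ∀ j, seg j = none → ∀ i, A i j = 0)
    (hblock : ∀ j c, seg j = some c → ∀ i, rb i ≠ c → A i j = 0)
    (hMDS : ∀ c : Fin k, ∀ J : Finset (Fin m), (∀ j ∈ J, seg j = some c) → J.card = t →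
      LinearIndependent F (fun j : {j // j ∈ J} => fun i => A i j.1))
    (q : Fin m) (c : Fin k) (hc : seg q = some c) (S : Finset (Fin m))
    (hrem : (((Finset.univ.filter fun j => seg j = some c).erase q) \ S).card ≤ t - 1) :
    (fun i => A i q) ∉
      Submodule.span F ((fun j i => A i j) '' {j : Fin m | j ∉ S ∧ j ≠ q}) := by
  intro hmem
  rw [Finsupp.mem_span_image_iff_linearCombination] at hmem
  obtain ⟨l, hlsupp, hlsum⟩ := hmem
  rw [Finsupp.mem_supported] at hlsupp
  set Jc : Finset (Fin m) := Finset.univ.filter fun j => seg j = some c with hJcdef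
  have hqJc : q ∈ Jc := by simp [hJcdef, hc]
  -- the segment-c part of the support of l
  set K : Finset (Fin m) := l.support.filter (fun j => seg j = some c) with hKdef
  have hKsub : K ⊆ (Jc.erase q) \ S := by
    intro j hj
    rw [hKdef, Finset.mem_filter] at hj
    have hj' := hlsupp hj.1
    simp only [Set.mem_setOf_eq] at hj'
    simp only [Finset.mem_sdiff, Finset.mem_erase]
    exact ⟨⟨hj'.2, by simp [hJcdef, hj.2]⟩, hj'.1⟩
  have hKcard : K.card ≤ t - 1 := le_trans (Finset.card_le_card hKsub) hrem
  have hqK : q ∉ K := by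
    intro hq
    have := hlsupp (Finset.mem_filter.1 hq).1
    simp only [Set.mem_setOf_eq] at this
    exact this.2 rfl
  -- extend {q} ∪ K to a set J ⊆ Jc with card t
  have hins : insert q K ⊆ Jc := by
    intro j hj
    rcases Finset.mem_insert.1 hj with rfl | hj
    · exact hqJc
    · simp only [hJcdef, Finset.mem_filter, Finset.mem_univ, true_and]
      exact (Finset.mem_filter.1 hj).2
  have hinscard : (insert q K).card ≤ t := by
    have := Finset.card_insert_le q K
    omega
  obtain ⟨J, hJins, hJsub, hJcard⟩ :=
    Finset.exists_subsuperset_card_eq hins hinscard (by rw [hseg c]; exact htℓ)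
  have hJseg : ∀ j ∈ J, seg j = some c := fun j hj => (Finset.mem_filter.1 (hJsub hj)).2
  have hLI := hMDS c J hJseg hJcard
  have hqJ : q ∈ J := hJins (Finset.mem_insert_self q K)
  have hKJ : K ⊆ J := fun j hj => hJins (Finset.mem_insert_of_mem hj)
  -- the combination restricted to K already reproduces column q
  rw [Finsupp.linearCombination_apply, Finsupp.sum] at hlsum
  have hKsum : (∑ j ∈ K, l j • (fun i => A i j)) = fun i => A i q := by
    funext i
    by_cases hi : rb i = c
    · have h1 := congrFun hlsum i
      rw [Finset.sum_apply] at h1 ⊢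
      rw [← h1, hKdef]
      apply Finset.sum_filter_of_ne
      intro j hj hne
      by_contra hsegj
      rcases hsegj' : seg j with _ | c'
      · exact hne (by simp [hzero j hsegj', Pi.smul_apply])
      · have hcc : c' ≠ c := fun h => hsegj (by rw [hsegj', h])
        exact hne (by simp [hblock j c' hsegj' i (by rw [hi]; exact hcc.symm), Pi.smul_apply])
    · rw [Finset.sum_apply]
      rw [hblock q c hc i hi]
      apply Finset.sum_eq_zero
      intro j hj
      have : seg j = some c := (Finset.mem_filter.1 hj).2
      simp [hblock j c this i hi, Pi.smul_apply]
  -- build a nontrivial vanishing combination on J, contradicting independence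
  set G : Fin m → F := fun j => if j = q then -1 else if j ∈ K then l j else 0 with hGdef
  have hzerosum : ∑ j : {j // j ∈ J}, G j.1 • (fun i => A i j.1) = 0 := by
    rw [Finset.sum_coe_sort J (fun j => G j • (fun i => A i j))]
    rw [← Finset.add_sum_erase J _ hqJ]
    have h1 : G q • (fun i => A i q) = -(fun i => A i q) := by
      simp [hGdef, neg_smul]
    have hsub : K ⊆ J.erase q := fun j hj =>
      Finset.mem_erase.2 ⟨fun h => hqK (h ▸ hj), hKJ hj⟩
    have h2 : ∑ j ∈ J.erase q, G j • (fun i => A i j)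
        = ∑ j ∈ K, l j • (fun i => A i j) := by
      rw [← Finset.sum_subset hsub (by
        intro j hj hjK
        have hjq : j ≠ q := (Finset.mem_erase.1 hj).1
        simp [hGdef, hjq, hjK])]
      apply Finset.sum_congr rfl
      intro j hj
      have hjq : j ≠ q := fun h => hqK (h ▸ hj)
      simp [hGdef, hjq, hj]
    rw [h1, h2, hKsum]
    simp
  have := Fintype.linearIndependent_iff.1 hLI (fun j => G j.1) hzerosum ⟨q, hqJ⟩
  simp [hGdef] at this

end Aux

/-- For the block-MDS base matrix `A^base` (with `k` column-segments of size `ℓ`, each carrying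
a `(T/k) × ℓ` MDS generator block on disjoint row blocks of size `t = T/k`, and all other
columns zero), and any `s` with `ℓ - T/k ≤ s ≤ m - 1`: the set of requests `q` that are
decodable with some side-information set of size `s` is exactly the set of indices of nonzero
columns, and it has size `k·ℓ`. -/
theorem stmt_6 {F : Type*} [Field F] {k t ℓ m : ℕ}
    (ht : 1 ≤ t) (htℓ : t ≤ ℓ) (hkl : k * ℓ ≤ m)
    (A : Matrix (Fin (k * t)) (Fin m) F)
    (seg : Fin m → Option (Fin k)) (rb : Fin (k * t) → Fin k)
    (hseg : ∀ c : Fin k, (Finset.univ.filter fun j => seg j = some c).card = ℓ)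
    (hrb : ∀ c : Fin k, (Finset.univ.filter fun i => rb i = c).card = t)
    (hzero : ∀ j, seg j = none → ∀ i, A i j = 0)
    (hblock : ∀ j c, seg j = some c → ∀ i, rb i ≠ c → A i j = 0)
    (hMDS : ∀ c : Fin k, ∀ J : Finset (Fin m), (∀ j ∈ J, seg j = some c) → J.card = t →
      LinearIndependent F (fun j : {j // j ∈ J} => fun i => A i j.1))
    (s : ℕ) (hs1 : ℓ - t ≤ s) (hs2 : s ≤ m - 1) :
    (Finset.univ.filter fun q : Fin m => ∃ S : Finset (Fin m), S.card = s ∧ q ∉ S ∧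
        (fun i => A i q) ∉
          Submodule.span F ((fun j i => A i j) '' {j : Fin m | j ∉ S ∧ j ≠ q}))
      = (Finset.univ.filter fun q : Fin m => (fun i => A i q) ≠ 0) ∧
    (Finset.univ.filter fun q : Fin m => ∃ S : Finset (Fin m), S.card = s ∧ q ∉ S ∧
        (fun i => A i q) ∉
          Submodule.span F ((fun j i => A i j) '' {j : Fin m | j ∉ S ∧ j ≠ q})).card
      = k * ℓ := by
  have hnz : ∀ q : Fin m, ∀ c, seg q = some c → (fun i => A i q) ≠ 0 := by
    intro q c hc
    have h1 : ({q} : Finset (Fin m)) ⊆ Finset.univ.filter (fun j => seg j = some c) := by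
      simp [hc]
    obtain ⟨J, hJ1, hJ2, hJ3⟩ := Finset.exists_subsuperset_card_eq h1
      (by simpa using ht) (by rw [hseg c]; exact htℓ)
    have hLI := hMDS c J (fun j hj => (Finset.mem_filter.1 (hJ2 hj)).2) hJ3
    exact hLI.ne_zero ⟨q, hJ1 (Finset.mem_singleton_self q)⟩
  have key : ∀ q : Fin m, (∃ S : Finset (Fin m), S.card = s ∧ q ∉ S ∧
        (fun i => A i q) ∉
          Submodule.span F ((fun j i => A i j) '' {j : Fin m | j ∉ S ∧ j ≠ q}))
      ↔ (fun i => A i q) ≠ 0 := by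
    intro q
    constructor
    · rintro ⟨S, -, -, hnot⟩ h0
      exact hnot (by rw [h0]; exact Submodule.zero_mem _)
    · intro hq0
      obtain ⟨c, hc⟩ : ∃ c, seg q = some c := by
        rcases h : seg q with _ | c
        · exact absurd (funext fun i => hzero q h i) hq0
        · exact ⟨c, rfl⟩
      set Jc : Finset (Fin m) := Finset.univ.filter (fun j => seg j = some c) with hJcdef
      have hqJc : q ∈ Jc := by simp [hJcdef, hc]
      have hP : (Jc.erase q).card = ℓ - 1 := by
        rw [Finset.card_erase_of_mem hqJc, hseg c]
      obtain ⟨S₁, hS₁sub, hS₁card⟩ := Finset.exists_subset_card_eq (s := Jc.erase q)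
        (n := min s (ℓ - 1)) (by rw [hP]; exact min_le_right _ _)
      have hS₁sub' : S₁ ⊆ Finset.univ.erase q := fun j hj =>
        Finset.mem_erase.2 ⟨(Finset.mem_erase.1 (hS₁sub hj)).1, Finset.mem_univ j⟩
      obtain ⟨S, hS₁S, hSsub, hScard⟩ := Finset.exists_subsuperset_card_eq (n := s) hS₁sub'
        (by rw [hS₁card]; exact min_le_left _ _)
        (by rw [Finset.card_erase_of_mem (Finset.mem_univ q), Finset.card_univ,
              Fintype.card_fin]; exact hs2)
      have hqS : q ∉ S := fun h => (Finset.mem_erase.1 (hSsub h)).1 rfl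
      refine ⟨S, hScard, hqS, ?_⟩
      apply aux_notMem_span ht htℓ A seg rb hseg hzero hblock hMDS q c hc S
      show (Jc.erase q \ S).card ≤ t - 1
      have h1 : (Jc.erase q \ S).card ≤ (Jc.erase q \ S₁).card :=
        Finset.card_le_card (Finset.sdiff_subset_sdiff (Finset.Subset.refl _) hS₁S)
      have h2 : (Jc.erase q \ S₁).card = (ℓ - 1) - min s (ℓ - 1) := by
        rw [Finset.card_sdiff_of_subset hS₁sub, hP, hS₁card]
      omega
  have hfilter_eq : (Finset.univ.filter fun q : Fin m => ∃ S : Finset (Fin m),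
        S.card = s ∧ q ∉ S ∧ (fun i => A i q) ∉
          Submodule.span F ((fun j i => A i j) '' {j : Fin m | j ∉ S ∧ j ≠ q}))
      = (Finset.univ.filter fun q : Fin m => (fun i => A i q) ≠ 0) := by
    ext q
    simp only [Finset.mem_filter, Finset.mem_univ, true_and]
    exact key q
  refine ⟨hfilter_eq, ?_⟩
  rw [hfilter_eq]
  have hbU : (Finset.univ.filter fun q : Fin m => (fun i => A i q) ≠ 0)
      = Finset.univ.biUnion (fun c : Fin k => Finset.univ.filter fun j => seg j = some c) := by
    ext j
    constructor
    · intro hj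
      have hne := (Finset.mem_filter.1 hj).2
      rcases h : seg j with _ | c
      · exact absurd (funext fun i => hzero j h i) hne
      · exact Finset.mem_biUnion.2
          ⟨c, Finset.mem_univ c, Finset.mem_filter.2 ⟨Finset.mem_univ j, h⟩⟩
    · intro hj
      obtain ⟨c, -, hc⟩ := Finset.mem_biUnion.1 hj
      exact Finset.mem_filter.2 ⟨Finset.mem_univ j, hnz j c (Finset.mem_filter.1 hc).2⟩
  rw [hbU, Finset.card_biUnion]
  · simp [hseg, Finset.sum_const, Finset.card_univ]
  · intro c1 _ c2 _ hne
    simp only [Finset.disjoint_left, Finset.mem_filter]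
    rintro j ⟨-, h1⟩ ⟨-, h2⟩
    exact hne (by rw [h1] at h2; exact Option.some_injective _ h2)
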